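/- For every x ∈ (0, π/2) and every positive integer n, 2 + (1/cos x)·Σ_{k=2}^{2n+1} (-1)^{k} D(k) x^{2k} < (sin x / x)² + (tan x)/x < 2 + (1/cos x)·Σ_{k=2}^{2n} (-1)^{k} D(k) x^{2k}. -/

import Mathlib

open Real Finset

/-- The coefficient `D(k) = (3^(2k+2) - 32k² - 40k - 9) / (4·(2k+2)!)`. -/
noncomputable def wchD (k : ℕ) : ℝ :=
  ((3 : ℝ) ^ (2 * k + 2) - 32 * (k : ℝ) ^ 2 - 40 * (k : ℝ) - 9) /
    (4 * (Nat.factorial (2 * k + 2) : ℝ))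

lemma wch_pow3 (k : ℕ) : (3:ℝ) ^ (2*k+2) = 9 ^ (k+1) := by
  rw [show 2*k+2 = 2*(k+1) by ring, pow_mul]; norm_num

lemma wchP_le (k : ℕ) : 32 * (k:ℝ)^2 + 40 * k + 9 ≤ 9 ^ (k+1) := by
  induction k with
  | zero => norm_num
  | succ n ih =>
    have h9 : (9:ℝ)^(n+1+1) = 9 * 9^(n+1) := by ring
    push_cast
    push_cast at ih
    nlinarith [ih, sq_nonneg ((n:ℝ)), Nat.cast_nonneg (α := ℝ) n]

lemma wchP_le' (k : ℕ) (hk : 2 ≤ k) :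
    112 * (32 * (k:ℝ)^2 + 40 * k + 9) ≤ 67 * 9 ^ (k+1) := by
  induction k, hk using Nat.le_induction with
  | base => norm_num
  | succ n hn ih =>
    have h9 : (9:ℝ)^(n+1+1) = 9 * 9^(n+1) := by ring
    push_cast
    push_cast at ih
    nlinarith [ih, sq_nonneg ((n:ℝ)), Nat.cast_nonneg (α := ℝ) n]

lemma wchD_nonneg (k : ℕ) : 0 ≤ wchD k := by
  unfold wchD
  apply div_nonneg
  · rw [wch_pow3]; linarith [wchP_le k]
  · positivity

lemma wchD_pos (k : ℕ) (hk : 2 ≤ k) : 0 < wchD k := by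
  unfold wchD
  apply div_pos
  · rw [wch_pow3]
    have h := wchP_le' k hk
    have h9 : (0:ℝ) < 9 ^ (k+1) := by positivity
    nlinarith
  · positivity

lemma wchD_le (k : ℕ) : wchD k ≤ 3 ^ (2*k+2) / (4 * (Nat.factorial (2*k+2) : ℝ)) := by
  unfold wchD
  gcongr
  nlinarith [sq_nonneg ((k:ℝ)), Nat.cast_nonneg (α := ℝ) k]

lemma wchD_decr (x : ℝ) (hx : 0 < x) (hx2 : x^2 < 5/2) (k : ℕ) (hk : 2 ≤ k) :
    wchD (k+1) * x^(2*(k+1)+2) < wchD k * x^(2*k+2) := by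
  -- numerators
  set N1 : ℝ := (3:ℝ)^(2*(k+1)+2) - 32*((k:ℝ)+1)^2 - 40*((k:ℝ)+1) - 9 with hN1
  set N0 : ℝ := (3:ℝ)^(2*k+2) - 32*(k:ℝ)^2 - 40*(k:ℝ) - 9 with hN0
  have hN1pos : 0 < N1 := by
    have := wchD_pos (k+1) (by omega)
    unfold wchD at this
    have hf : (0:ℝ) < 4 * (Nat.factorial (2*(k+1)+2) : ℝ) := by positivity
    have := (div_pos_iff.mp this)
    rcases this with ⟨h, _⟩ | ⟨_, h⟩
    · rw [hN1]; push_cast at h ⊢; exact h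
    · linarith
  have hN0pos : 0 < N0 := by
    have := wchD_pos k hk
    unfold wchD at this
    have hf : (0:ℝ) < 4 * (Nat.factorial (2*k+2) : ℝ) := by positivity
    rcases div_pos_iff.mp this with ⟨h, _⟩ | ⟨_, h⟩
    · exact h
    · linarith
  -- key inequality
  have key : x^2 * N1 < ((2*(k:ℝ)+3) * (2*(k:ℝ)+4)) * N0 := by
    have h5 : 5 * N1 ≤ 112 * N0 := by
      have h1 := wchP_le' k hk
      have h2 : (0:ℝ) ≤ 32*((k:ℝ)+1)^2 + 40*((k:ℝ)+1) + 9 := by positivity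
      have e1 : (3:ℝ)^(2*(k+1)+2) = 9 * 9^(k+1) := by
        rw [wch_pow3]; ring
      rw [hN1, hN0, e1, wch_pow3]
      nlinarith
    have h56 : (56:ℝ) ≤ (2*(k:ℝ)+3) * (2*(k:ℝ)+4) := by
      have : (2:ℝ) ≤ (k:ℝ) := by exact_mod_cast hk
      nlinarith
    calc x^2 * N1 < (5/2) * N1 := by nlinarith
    _ ≤ 56 * N0 := by nlinarith
    _ ≤ ((2*(k:ℝ)+3) * (2*(k:ℝ)+4)) * N0 := by nlinarith
  -- factorials
  have hfac : ((Nat.factorial (2*(k+1)+2)) : ℝ) = (2*(k:ℝ)+4) * ((2*(k:ℝ)+3) * (Nat.factorial (2*k+2) : ℝ)) := by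
    rw [show 2*(k+1)+2 = (2*k+3)+1 by ring, Nat.factorial_succ,
      show 2*k+3 = (2*k+2)+1 by ring, Nat.factorial_succ]
    push_cast; ring
  have hF0 : (0:ℝ) < (Nat.factorial (2*k+2) : ℝ) := by positivity
  have hxp : (0:ℝ) < x^(2*k+2) := by positivity
  unfold wchD
  rw [div_mul_eq_mul_div, div_mul_eq_mul_div, div_lt_div_iff₀ (by rw[hfac]; positivity) (by positivity)]
  rw [hfac]
  push_cast
  have hxe : x^(2*(k+1)+2) = x^2 * x^(2*k+2) := by
    rw [show 2*(k+1)+2 = 2 + (2*k+2) by ring, pow_add]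
  rw [hxe]
  have hN1e : ((3:ℝ)^(2*(k+1):ℕ)*9 - 32*((k:ℝ)+1)^2 - 40*((k:ℝ)+1) - 9) = N1 := by
    rw [hN1]; push_cast
    rw [show (2*(k+1)+2) = 2*(k+1) + 2 by ring, pow_add]; ring
  have final := mul_lt_mul_of_pos_right key (mul_pos hxp (mul_pos (by norm_num : (0:ℝ) < 4) hF0))
  rw [hN1, hN0] at final
  ring_nf at final ⊢
  linarith [final]

lemma wch_summable (x : ℝ) :
    Summable (fun k : ℕ => (-1:ℝ)^k * wchD k * x^(2*k+2)) := by
  have hb : Summable (fun k : ℕ => (3*|x|)^(2*k+2) / ((Nat.factorial (2*k+2)) : ℝ)) := by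
    have := (Real.summable_pow_div_factorial (3*|x|)).comp_injective
      (i := fun k : ℕ => 2*k+2) (fun a b h => by dsimp only at h; omega)
    exact this
  apply Summable.of_norm_bounded hb
  intro k
  have h1 : ‖(-1:ℝ)^k * wchD k * x^(2*k+2)‖ = wchD k * |x|^(2*k+2) := by
    rw [norm_mul, norm_mul, norm_pow, norm_neg, norm_one, one_pow, one_mul,
      Real.norm_eq_abs, Real.norm_eq_abs, abs_of_nonneg (wchD_nonneg k), abs_pow]
  rw [h1]
  have h2 : wchD k * |x|^(2*k+2) ≤ (3 ^ (2*k+2) / (4 * (Nat.factorial (2*k+2) : ℝ))) * |x|^(2*k+2) := by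
    apply mul_le_mul_of_nonneg_right (wchD_le k) (by positivity)
  refine h2.trans ?_
  have hF : (0:ℝ) < (Nat.factorial (2*k+2) : ℝ) := by positivity
  have e : (3:ℝ)^(2*k+2) / (4 * (Nat.factorial (2*k+2) : ℝ)) * |x|^(2*k+2)
      = (3*|x|)^(2*k+2) / (4 * (Nat.factorial (2*k+2) : ℝ)) := by
    rw [mul_pow]; ring
  rw [e]
  gcongr
  linarith

lemma wch_hasSum (x : ℝ) :
    HasSum (fun k : ℕ => (-1:ℝ)^k * wchD k * x^(2*k+2))
      (Real.cos x * Real.sin x ^ 2 + x * Real.sin x - 2*x^2*Real.cos x) := by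
  have h1 := Real.hasSum_cos x
  have h2 := Real.hasSum_cos (3*x)
  have h3 := (Real.hasSum_sin x).mul_left x
  have h4 := (Real.hasSum_cos x).mul_left (2*x^2)
  have h1' : HasSum (fun n : ℕ => (-1:ℝ)^(n+1) * x^(2*(n+1)) / ((Nat.factorial (2*(n+1))) : ℝ))
      (Real.cos x - 1) := by
    refine (hasSum_nat_add_iff (f := fun n : ℕ => (-1:ℝ)^n * x^(2*n) / ((Nat.factorial (2*n)) : ℝ)) 1).mpr ?_
    simpa using h1
  have h2' : HasSum (fun n : ℕ => (-1:ℝ)^(n+1) * (3*x)^(2*(n+1)) / ((Nat.factorial (2*(n+1))) : ℝ))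
      (Real.cos (3*x) - 1) := by
    refine (hasSum_nat_add_iff (f := fun n : ℕ => (-1:ℝ)^n * (3*x)^(2*n) / ((Nat.factorial (2*n)) : ℝ)) 1).mpr ?_
    simpa using h2
  have hG := (((h1'.sub h2').mul_left (4⁻¹ : ℝ)).add h3).sub h4
  have hfun : (fun k : ℕ => (-1:ℝ)^k * wchD k * x^(2*k+2)) =
      (fun k : ℕ => 4⁻¹ * ((-1:ℝ)^(k+1) * x^(2*(k+1)) / ((Nat.factorial (2*(k+1))) : ℝ)
          - (-1:ℝ)^(k+1) * (3*x)^(2*(k+1)) / ((Nat.factorial (2*(k+1))) : ℝ))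
        + x * ((-1:ℝ)^k * x^(2*k+1) / ((Nat.factorial (2*k+1)) : ℝ))
        - 2*x^2 * ((-1:ℝ)^k * x^(2*k) / ((Nat.factorial (2*k)) : ℝ))) := by
    funext k
    have hf1 : ((Nat.factorial (2*(k+1))) : ℝ) = (2*(k:ℝ)+2) * ((2*(k:ℝ)+1) * (Nat.factorial (2*k) : ℝ)) := by
      rw [show 2*(k+1) = (2*k+1)+1 by ring, Nat.factorial_succ,
        show 2*k+1 = (2*k)+1 by ring, Nat.factorial_succ]
      push_cast; ring
    have hf2 : ((Nat.factorial (2*k+1)) : ℝ) = (2*(k:ℝ)+1) * (Nat.factorial (2*k) : ℝ) := by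
      rw [Nat.factorial_succ]; push_cast; ring
    have hf3 : ((Nat.factorial (2*k+2)) : ℝ) = (2*(k:ℝ)+2) * ((2*(k:ℝ)+1) * (Nat.factorial (2*k) : ℝ)) := by
      rw [show 2*k+2 = (2*k+1)+1 by ring, Nat.factorial_succ]; push_cast [hf2]; ring
    have hx1 : x^(2*(k+1)) = x^(2*k+2) := by norm_num [show 2*(k+1) = 2*k+2 by ring]
    have hx2 : (3*x)^(2*(k+1)) = 3^(2*k+2) * x^(2*k+2) := by
      rw [mul_pow, show 2*(k+1) = 2*k+2 by ring]
    have hx3 : x * x^(2*k+1) = x^(2*k+2) := by rw [← pow_succ']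
    have hx4 : x^2 * x^(2*k) = x^(2*k+2) := by rw [← pow_add]; ring_nf
    unfold wchD
    rw [hf1, hf2, hf3, hx1, hx2]
    have hF : ((Nat.factorial (2*k)) : ℝ) ≠ 0 := by positivity
    have e1 : (2*(k:ℝ)+1) ≠ 0 := by positivity
    have e2 : (2*(k:ℝ)+2) ≠ 0 := by positivity
    field_simp
    ring
  rw [hfun]
  have hval : Real.cos x * Real.sin x ^ 2 + x * Real.sin x - 2*x^2*Real.cos x
      = 4⁻¹ * ((Real.cos x - 1) - (Real.cos (3*x) - 1)) + x * Real.sin x - 2*x^2 * Real.cos x := by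
    rw [Real.cos_three_mul]
    have hs : Real.sin x ^ 2 = 1 - Real.cos x ^ 2 := Real.sin_sq x
    rw [hs]; ring
  rw [hval]
  exact hG

lemma wch_tail_pos (x : ℝ) (hx : 0 < x) (hx2 : x^2 < 5/2) (m : ℕ) (hm : 3 ≤ m) :
    0 < (-1:ℝ)^m * ∑' j : ℕ, (-1:ℝ)^(j+m) * wchD (j+m) * x^(2*(j+m)+2) := by
  set g : ℕ → ℝ := fun j => wchD (j+m) * x^(2*(j+m)+2) with hg
  have hgpos : ∀ j, 0 < g j - g (j+1) := by
    intro j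
    have h := wchD_decr x hx hx2 (j+m) (by omega)
    have e : (j+1)+m = (j+m)+1 := by omega
    rw [hg]
    simp only [e]
    linarith
  have hsumf : Summable (fun j : ℕ => (-1:ℝ)^(j+m) * wchD (j+m) * x^(2*(j+m)+2)) := by
    have := (summable_nat_add_iff (f := fun k : ℕ => (-1:ℝ)^k * wchD k * x^(2*k+2)) m).2
      (wch_summable x)
    exact this
  rw [← tsum_mul_left]
  have hfun : (fun j : ℕ => (-1:ℝ)^m * ((-1:ℝ)^(j+m) * wchD (j+m) * x^(2*(j+m)+2)))
      = fun j => (-1:ℝ)^j * g j := by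
    funext j
    have : ((-1:ℝ)^m)^2 = 1 := by
      rw [← pow_mul, mul_comm, pow_mul]; norm_num
    rw [hg, pow_add]
    linear_combination ((-1:ℝ)^j * wchD (j+m) * x^(2*(j+m)+2)) * this
  rw [hfun]
  have hsumh : Summable (fun j : ℕ => (-1:ℝ)^j * g j) := by
    rw [← hfun]
    exact hsumf.mul_left _
  have he : Summable (fun i : ℕ => (-1:ℝ)^(2*i) * g (2*i)) :=
    hsumh.comp_injective (fun a b h => by omega)
  have ho : Summable (fun i : ℕ => (-1:ℝ)^(2*i+1) * g (2*i+1)) :=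
    hsumh.comp_injective (fun a b h => by omega)
  rw [← tsum_even_add_odd (f := fun j : ℕ => (-1:ℝ)^j * g j) he ho, ← Summable.tsum_add he ho]
  have hterm : ∀ i : ℕ, (-1:ℝ)^(2*i) * g (2*i) + (-1:ℝ)^(2*i+1) * g (2*i+1) = g (2*i) - g (2*i+1) := by
    intro i
    have h1 : (-1:ℝ)^(2*i) = 1 := by rw [pow_mul]; norm_num
    rw [pow_succ, h1]; ring
  apply Summable.tsum_pos (he.add ho) _ 0
  · rw [hterm 0]; exact hgpos 0
  · intro i
    rw [hterm i]
    exact le_of_lt (hgpos (2*i))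

theorem sinx_div_x_sq_add_tanx_div_x_bounds :
    ∀ x ∈ Set.Ioo (0 : ℝ) (π / 2), ∀ n : ℕ, 1 ≤ n →
      2 + (1 / Real.cos x) *
            (∑ k ∈ Finset.Icc 2 (2 * n + 1), (-1 : ℝ) ^ k * wchD k * x ^ (2 * k))
          < (Real.sin x / x) ^ 2 + Real.tan x / x ∧
      (Real.sin x / x) ^ 2 + Real.tan x / x
          < 2 + (1 / Real.cos x) *
            (∑ k ∈ Finset.Icc 2 (2 * n), (-1 : ℝ) ^ k * wchD k * x ^ (2 * k)) := by
  intro x hx n hn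
  obtain ⟨hx0, hxp⟩ := hx
  have hpi := Real.pi_gt_d6
  have hpi2 := Real.pi_lt_d2
  have hc : 0 < Real.cos x := Real.cos_pos_of_mem_Ioo ⟨by linarith, hxp⟩
  have hx2 : x^2 < 5/2 := by nlinarith
  have hG := wch_hasSum x
  have hsumm := (wch_summable x)
  -- tails
  have key : ∀ L : ℕ,
      (Real.cos x * Real.sin x ^ 2 + x * Real.sin x - 2*x^2*Real.cos x)
        - ∑ k ∈ Finset.range (L+1), (-1:ℝ)^k * wchD k * x^(2*k+2)
      = ∑' j : ℕ, (-1:ℝ)^(j+(L+1)) * wchD (j+(L+1)) * x^(2*(j+(L+1))+2) := by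
    intro L
    have h := Summable.sum_add_tsum_nat_add (f := fun k : ℕ => (-1:ℝ)^k * wchD k * x^(2*k+2)) (L+1) hsumm
    rw [hG.tsum_eq] at h
    linarith
  -- Icc sums
  have hIcc : ∀ L : ℕ, 2 ≤ L →
      ∑ k ∈ Finset.range (L+1), (-1:ℝ)^k * wchD k * x^(2*k+2)
        = x^2 * ∑ k ∈ Finset.Icc 2 L, (-1:ℝ)^k * wchD k * x^(2*k) := by
    intro L hL
    rw [Finset.mul_sum, Finset.range_eq_Ico,
      ← Finset.sum_Ico_consecutive _ (Nat.zero_le 2) (by omega : 2 ≤ L+1)]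
    have h01 : ∑ k ∈ Finset.Ico 0 2, (-1:ℝ)^k * wchD k * x^(2*k+2) = 0 := by
      have e : Finset.Ico 0 2 = {0, 1} := by decide
      rw [e]
      have hD0 : wchD 0 = 0 := by norm_num [wchD]
      have hD1 : wchD 1 = 0 := by norm_num [wchD, Nat.factorial]
      simp [hD0, hD1]
    rw [h01, zero_add, Finset.Ico_add_one_right_eq_Icc]
    apply Finset.sum_congr rfl
    intro k _
    rw [show 2*k+2 = 2 + 2*k by ring, pow_add]
    ring
  -- relation to target quantity
  have hxne : x ≠ 0 := ne_of_gt hx0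
  have hcne : Real.cos x ≠ 0 := ne_of_gt hc
  have hGA : Real.cos x * Real.sin x ^ 2 + x * Real.sin x - 2*x^2*Real.cos x
      = Real.cos x * x^2 * (((Real.sin x / x) ^ 2 + Real.tan x / x) - 2) := by
    rw [Real.tan_eq_sin_div_cos]
    field_simp
  constructor
  · -- lower bound, L = 2n+1, m = 2n+2 even
    have htail := wch_tail_pos x hx0 hx2 (2*n+2) (by omega)
    have heven : (-1:ℝ)^(2*n+2) = 1 := by
      rw [show 2*n+2 = 2*(n+1) by ring, pow_mul]; norm_num
    rw [heven, one_mul] at htail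
    have h1 := key (2*n+1)
    rw [hGA, hIcc (2*n+1) (by omega)] at h1
    set S := ∑ k ∈ Finset.Icc 2 (2*n+1), (-1:ℝ)^k * wchD k * x^(2*k) with hS
    have h2 : x^2 * S < Real.cos x * x^2 * (((Real.sin x / x) ^ 2 + Real.tan x / x) - 2) := by
      rw [show (2*n+1)+1 = 2*n+2 by ring] at h1
      linarith
    have h3 : S < Real.cos x * (((Real.sin x / x) ^ 2 + Real.tan x / x) - 2) := by
      have hx2p : (0:ℝ) < x^2 := by positivity
      nlinarith
    have h4 : (1 / Real.cos x) * S < ((Real.sin x / x) ^ 2 + Real.tan x / x) - 2 := by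
      rw [one_div, inv_mul_lt_iff₀ hc] at *
      · nlinarith
    linarith
  · -- upper bound, L = 2n, m = 2n+1 odd
    have htail := wch_tail_pos x hx0 hx2 (2*n+1) (by omega)
    have hodd : (-1:ℝ)^(2*n+1) = -1 := by
      rw [pow_succ, pow_mul]; norm_num
    rw [hodd] at htail
    have h1 := key (2*n)
    rw [hGA, hIcc (2*n) (by omega)] at h1
    set S := ∑ k ∈ Finset.Icc 2 (2*n), (-1:ℝ)^k * wchD k * x^(2*k) with hS
    have h2 : Real.cos x * x^2 * (((Real.sin x / x) ^ 2 + Real.tan x / x) - 2) < x^2 * S := by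
      rw [show (2*n)+1 = 2*n+1 by rfl] at h1
      linarith
    have h3 : Real.cos x * (((Real.sin x / x) ^ 2 + Real.tan x / x) - 2) < S := by
      have hx2p : (0:ℝ) < x^2 := by positivity
      nlinarith
    have h4 : ((Real.sin x / x) ^ 2 + Real.tan x / x) - 2 < (1 / Real.cos x) * S := by
      rw [one_div, lt_inv_mul_iff₀ hc]
      nlinarith
    linarith
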